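/- In a partial cube, every 4-cycle is convex: if C is a cycle of length 4 in a partial cube G, then for every pair of vertices u,v of C, every shortest u,v-path in G lies entirely in C. -/
import Mathlib


open SimpleGraph

lemma common_nbr {n : ℕ} {x y z : Fin n → Bool}
    (hxy : hammingDist x y = 2) (h1 : hammingDist x z = 1) (h2 : hammingDist z y = 1) :
    ∃ k, x k ≠ y k ∧ z = Function.update x k (y k) := by
  unfold hammingDist at hxy h1 h2
  obtain ⟨k, hk⟩ := Finset.card_eq_one.mp h1
  have hmem : ∀ i, x i ≠ z i ↔ i = k := by
    intro i
    constructor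
    · intro h
      have : i ∈ Finset.univ.filter (fun j => x j ≠ z j) := by simp [h]
      rw [hk] at this; simpa using this
    · rintro rfl
      have : i ∈ Finset.univ.filter (fun j => x j ≠ z j) := by rw [hk]; simp
      simpa using this
  have hxyk : x k ≠ y k := by
    intro hxk
    have hsub : Finset.univ.filter (fun i => x i ≠ y i) ⊆
        Finset.univ.filter (fun i => z i ≠ y i) := by
      intro i hi
      simp only [Finset.mem_filter, Finset.mem_univ, true_and] at hi ⊢
      rcases eq_or_ne i k with rfl | hik
      · exact absurd hxk hi
      · have hxi : x i = z i := by
          by_contra h; exact hik ((hmem i).mp h)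
        rwa [← hxi]
    have := Finset.card_le_card hsub
    omega
  have hzk : z k ≠ x k := fun h => (hmem k).mpr rfl h.symm
  refine ⟨k, hxyk, funext fun i => ?_⟩
  rcases eq_or_ne i k with rfl | hik
  · rw [Function.update_self]
    revert hzk hxyk; cases z i <;> cases x i <;> cases y i <;> simp
  · rw [Function.update_of_ne hik]
    by_contra h
    exact hik ((hmem i).mp (Ne.symm h))

lemma two_common {n : ℕ} {x y z₁ z₂ z₃ : Fin n → Bool} (hxy : hammingDist x y = 2)
    (h11 : hammingDist x z₁ = 1) (h12 : hammingDist z₁ y = 1)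
    (h21 : hammingDist x z₂ = 1) (h22 : hammingDist z₂ y = 1)
    (h31 : hammingDist x z₃ = 1) (h32 : hammingDist z₃ y = 1)
    (hne : z₁ ≠ z₂) : z₃ = z₁ ∨ z₃ = z₂ := by
  obtain ⟨k₁, hk₁, rfl⟩ := common_nbr hxy h11 h12
  obtain ⟨k₂, hk₂, rfl⟩ := common_nbr hxy h21 h22
  obtain ⟨k₃, hk₃, rfl⟩ := common_nbr hxy h31 h32
  have hk12 : k₁ ≠ k₂ := by rintro rfl; exact hne rfl
  have hor : k₃ = k₁ ∨ k₃ = k₂ := by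
    by_contra h
    push_neg at h
    have hsub : ({k₁, k₂, k₃} : Finset (Fin n)) ⊆
        Finset.univ.filter (fun i => x i ≠ y i) := by
      intro i hi
      simp only [Finset.mem_insert, Finset.mem_singleton] at hi
      simp only [Finset.mem_filter, Finset.mem_univ, true_and]
      rcases hi with rfl | rfl | rfl
      · exact hk₁
      · exact hk₂
      · exact hk₃
    have hcard : ({k₁, k₂, k₃} : Finset (Fin n)).card = 3 := by
      rw [Finset.card_insert_of_notMem, Finset.card_insert_of_notMem, Finset.card_singleton]
      · simp [h.2.symm]
      · simp only [Finset.mem_insert, Finset.mem_singleton]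
        push_neg
        exact ⟨hk12, h.1.symm⟩
    have := Finset.card_le_card hsub
    unfold hammingDist at hxy
    omega
  rcases hor with rfl | rfl
  · exact Or.inl rfl
  · exact Or.inr rfl

lemma mid_eq {V : Type} {G : SimpleGraph V} {n : ℕ} {f : V → (Fin n → Bool)}
    (hinj : Function.Injective f)
    (hdist : ∀ u v : V, hammingDist (f u) (f v) = G.dist u v)
    {u w m b d : V} (hd2 : G.dist u w = 2)
    (hum : G.Adj u m) (hmw : G.Adj m w)
    (hub : G.Adj u b) (hbw : G.Adj b w)
    (hud : G.Adj u d) (hdw : G.Adj d w)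
    (hbd : b ≠ d) : m = b ∨ m = d := by
  have e : ∀ s t : V, G.Adj s t → hammingDist (f s) (f t) = 1 := by
    intro s t h
    rw [hdist]
    exact dist_eq_one_iff_adj.mpr h
  have hxy : hammingDist (f u) (f w) = 2 := by rw [hdist]; exact hd2
  have hfne : f b ≠ f d := fun h => hbd (hinj h)
  have := two_common hxy (e _ _ hub) (e _ _ hbw) (e _ _ hud) (e _ _ hdw)
    (e _ _ hum) (e _ _ hmw) hfne
  rcases this with h | h
  · exact Or.inl (hinj h)
  · exact Or.inr (hinj h)


/-- A partial cube: a connected graph admitting an isometric embedding into a hypercube,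
i.e. an injective map to `{0,1}^n` such that Hamming distance equals graph distance. -/
def IsPartialCube {V : Type} (G : SimpleGraph V) : Prop :=
  G.Connected ∧ ∃ (n : ℕ) (f : V → (Fin n → Bool)),
    Function.Injective f ∧ ∀ u v : V, hammingDist (f u) (f v) = G.dist u v

/-- In a partial cube, every 4-cycle is convex: every shortest path between two
vertices of the cycle stays on the cycle. -/
theorem fourCycle_convex {V : Type} (G : SimpleGraph V) (hG : IsPartialCube G)
    {v : V} (c : G.Walk v v) (hc : c.IsCycle) (hlen : c.length = 4) :
    ∀ u w : V, u ∈ c.support → w ∈ c.support →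
      ∀ p : G.Walk u w, p.length = G.dist u w →
        ∀ z ∈ p.support, z ∈ c.support := by
  obtain ⟨hconn, n, f, hinj, hdist⟩ := hG
  intro u w hu hw p hp z hz
  cases c with
  | nil => simp at hlen
  | cons h₁ c₁ =>
  cases c₁ with
  | nil => simp at hlen
  | cons h₂ c₂ =>
  cases c₂ with
  | nil => simp at hlen
  | cons h₃ c₃ =>
  cases c₃ with
  | nil => simp at hlen
  | cons h₄ c₄ =>
  cases c₄ with
  | cons h₅ c₅ => simp [SimpleGraph.Walk.length_cons] at hlen
  | nil =>
  rename_i a b d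
  -- edges: h₁ : G.Adj v a, h₂ : G.Adj a b, h₃ : G.Adj b d, h₄ : G.Adj d v
  have hnd := hc.support_nodup
  simp [List.nodup_cons] at hnd
  obtain ⟨⟨hab, had, hav⟩, ⟨hbd, hbv⟩, hdv⟩ := hnd
  simp only [Walk.support_cons, Walk.support_nil, List.mem_cons,
    List.mem_singleton, List.not_mem_nil, or_false] at hu hw ⊢
  -- hu : u = v ∨ u = a ∨ u = b ∨ u = d (with trailing v)
  have hdle : G.dist u w ≤ 2 := by
    have H : ∀ s t : V, ∀ q : G.Walk s t, q.length ≤ 2 → G.dist s t ≤ 2 :=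
      fun s t q hq => (dist_le q).trans hq
    rcases hu with rfl | rfl | rfl | rfl | rfl <;>
      rcases hw with rfl | rfl | rfl | rfl | rfl <;>
      first
        | exact H _ _ Walk.nil (by simp)
        | exact H _ _ h₁.toWalk (by simp)
        | exact H _ _ h₁.symm.toWalk (by simp)
        | exact H _ _ h₂.toWalk (by simp)
        | exact H _ _ h₂.symm.toWalk (by simp)
        | exact H _ _ h₃.toWalk (by simp)
        | exact H _ _ h₃.symm.toWalk (by simp)
        | exact H _ _ h₄.toWalk (by simp)
        | exact H _ _ h₄.symm.toWalk (by simp)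
        | exact H _ _ (Walk.cons h₁ h₂.toWalk) (by simp)
        | exact H _ _ (Walk.cons h₃ h₄.toWalk) (by simp)
        | exact H _ _ (Walk.cons h₂ h₃.toWalk) (by simp)
        | exact H _ _ (Walk.cons h₄ h₁.toWalk) (by simp)
  cases p with
  | nil =>
    simp only [Walk.support_nil, List.mem_singleton] at hz
    subst hz; exact hu
  | cons h q =>
  cases q with
  | nil =>
    simp only [Walk.support_cons, Walk.support_nil, List.mem_cons,
      List.mem_singleton, List.not_mem_nil, or_false] at hz
    rcases hz with rfl | rfl
    · exact hu
    · exact hw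
  | cons h' q' =>
  cases q' with
  | cons h'' q'' =>
    exfalso
    simp only [Walk.length_cons] at hp
    omega
  | nil =>
  rename_i m
  -- h : G.Adj u m, h' : G.Adj m w
  have hd2 : G.dist u w = 2 := by
    rw [← hp]; simp
  simp only [Walk.support_cons, Walk.support_nil, List.mem_cons,
    List.mem_singleton, List.not_mem_nil, or_false] at hz
  rcases hz with rfl | rfl | rfl
  · exact hu
  · -- z = m : the middle vertex
    have same : ∀ s : V, ¬ (G.dist s s = 2) := by intro s hs; simp only [dist_self] at hs; omega
    rcases hu with rfl | rfl | rfl | rfl | rfl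
    · rcases hw with rfl | rfl | rfl | rfl | rfl
      · exact absurd hd2 (same _)
      · have := dist_eq_one_iff_adj.mpr h₁; omega
      · rcases mid_eq hinj hdist hd2 h h' h₁ h₂ h₄.symm h₃.symm had with rfl | rfl <;> tauto
      · have := dist_eq_one_iff_adj.mpr h₄.symm; omega
      · exact absurd hd2 (same _)
    · rcases hw with rfl | rfl | rfl | rfl | rfl
      · have := dist_eq_one_iff_adj.mpr h₁.symm; omega
      · exact absurd hd2 (same _)
      · have := dist_eq_one_iff_adj.mpr h₂; omega
      · rcases mid_eq hinj hdist hd2 h h' h₂ h₃ h₁.symm h₄.symm hbv with rfl | rfl <;> tauto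
      · have := dist_eq_one_iff_adj.mpr h₁.symm; omega
    · rcases hw with rfl | rfl | rfl | rfl | rfl
      · rcases mid_eq hinj hdist hd2 h h' h₂.symm h₁.symm h₃ h₄ had with rfl | rfl <;> tauto
      · have := dist_eq_one_iff_adj.mpr h₂.symm; omega
      · exact absurd hd2 (same _)
      · have := dist_eq_one_iff_adj.mpr h₃; omega
      · rcases mid_eq hinj hdist hd2 h h' h₂.symm h₁.symm h₃ h₄ had with rfl | rfl <;> tauto
    · rcases hw with rfl | rfl | rfl | rfl | rfl
      · have := dist_eq_one_iff_adj.mpr h₄; omega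
      · rcases mid_eq hinj hdist hd2 h h' h₃.symm h₂.symm h₄ h₁ hbv with rfl | rfl <;> tauto
      · have := dist_eq_one_iff_adj.mpr h₃.symm; omega
      · exact absurd hd2 (same _)
      · have := dist_eq_one_iff_adj.mpr h₄; omega
    · rcases hw with rfl | rfl | rfl | rfl | rfl
      · exact absurd hd2 (same _)
      · have := dist_eq_one_iff_adj.mpr h₁; omega
      · rcases mid_eq hinj hdist hd2 h h' h₁ h₂ h₄.symm h₃.symm had with rfl | rfl <;> tauto
      · have := dist_eq_one_iff_adj.mpr h₄.symm; omega
      · exact absurd hd2 (same _)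
  · exact hw
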